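/- Let n, t with 1 ≤ t < n−1, s : Fin n → ℝ nonnegative nonincreasing, and set ξ* = min(⌊(2n−t)/(n−t)⌋, t+1). Then the minimum of ∑_{i=1}^n v i over all nonnegative vectors v that are feasible (for every j and every t-subset A with j ∉ A, ∑_{i∉A} v i ≥ s j) equals ∑_{i=1}^{ξ*−1} s i + ((2n−t)/(n−t) − ξ*) · s_{ξ*}. -/

import Mathlib

set_option maxHeartbeats 1000000

lemma card_filter_val_lt (n m : ℕ) (h : m ≤ n) :
    ((Finset.univ : Finset (Fin n)).filter (fun i => i.val < m)).card = m := by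
  have : (Finset.univ : Finset (Fin n)).filter (fun i => i.val < m)
      = Finset.map (Fin.castLEEmb h) Finset.univ := by
    ext x
    simp only [Finset.mem_filter, Finset.mem_univ, true_and, Finset.mem_map,
      Fin.castLEEmb_apply]
    constructor
    · intro hx; exact ⟨⟨x.val, hx⟩, rfl⟩
    · rintro ⟨y, rfl⟩; exact y.isLt
  rw [this, Finset.card_map, Finset.card_univ, Fintype.card_fin]

theorem stmt7 (n t : ℕ) (ht : 1 ≤ t) (htn : t + 1 < n)
    (s : Fin n → ℝ) (hs0 : ∀ i, 0 ≤ s i)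
    (hsmono : ∀ i j : Fin n, i ≤ j → s j ≤ s i)
    (ξs : ℕ) (hξ : ξs = min ((2 * n - t) / (n - t)) (t + 1)) :
    IsLeast {x : ℝ | ∃ v : Fin n → ℝ, (∀ i, 0 ≤ v i) ∧
        (∀ (j : Fin n) (A : Finset (Fin n)), A.card = t → j ∉ A →
          s j ≤ ∑ i ∈ Aᶜ, v i) ∧
        x = ∑ i, v i}
      ((∑ j ∈ Finset.univ.filter (fun j : Fin n => j.val < ξs - 1), s j) +
        ((2 * (n : ℝ) - t) / ((n : ℝ) - t) - (ξs : ℝ)) *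
          s ⟨ξs - 1, by
            have h : ξs ≤ t + 1 := by rw [hξ]; exact min_le_right _ _
            omega⟩) := by
  -- basic numeric facts
  have hnt0 : 0 < n - t := by omega
  have hq2 : 2 ≤ (2 * n - t) / (n - t) := by
    rw [Nat.le_div_iff_mul_le hnt0]; omega
  have hξ2 : 2 ≤ ξs := by rw [hξ]; exact le_min hq2 (by omega)
  have hξt : ξs ≤ t + 1 := by rw [hξ]; exact min_le_right _ _
  have hκn : ξs - 1 < n := by omega
  -- real constants
  set N : ℝ := (n : ℝ) with hN
  set T : ℝ := (t : ℝ) with hT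
  have hTN : T + 2 ≤ N := by rw [hT, hN]; exact_mod_cast (by omega : t + 2 ≤ n)
  have hT1 : (1:ℝ) ≤ T := by rw [hT]; exact_mod_cast ht
  have hd0 : (0:ℝ) < N - T := by linarith
  set c : ℝ := (2 * N - T) / (N - T) with hc
  have hcast2nt : ((2 * n - t : ℕ) : ℝ) = 2 * N - T := by
    rw [hN, hT]; push_cast [Nat.cast_sub (by omega : t ≤ 2 * n)]; ring
  have hcastnt : ((n - t : ℕ) : ℝ) = N - T := by
    rw [hN, hT]; push_cast [Nat.cast_sub (by omega : t ≤ n)]; ring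
  have hξc : (ξs : ℝ) ≤ c := by
    have h1 : ξs ≤ (2 * n - t) / (n - t) := by rw [hξ]; exact min_le_left _ _
    have h2 : ((2 * n - t) / (n - t)) * (n - t) ≤ 2 * n - t := Nat.div_mul_le_self _ _
    have h3 : ξs * (n - t) ≤ 2 * n - t := le_trans (Nat.mul_le_mul_right _ h1) h2
    have h4 : ((ξs * (n - t) : ℕ) : ℝ) ≤ ((2 * n - t : ℕ) : ℝ) := by exact_mod_cast h3
    rw [Nat.cast_mul, hcastnt, hcast2nt] at h4
    rw [hc, le_div_iff₀ hd0]; linarith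
  have hcξ : c ≤ (ξs : ℝ) + 1 := by
    rcases le_or_gt ((2 * n - t) / (n - t)) (t + 1) with hcase | hcase
    · have hξeq : ξs = (2 * n - t) / (n - t) := by rw [hξ, min_eq_left hcase]
      have h1 := Nat.div_add_mod (2 * n - t) (n - t)
      have h2 := Nat.mod_lt (2 * n - t) hnt0
      have hq := (2 * n - t) / (n - t)
      have hring : (ξs + 1) * (n - t) = (n - t) * ((2*n-t)/(n-t)) + (n - t) := by
        rw [hξeq]; ring
      have h3 : 2 * n - t < (ξs + 1) * (n - t) := by omega
      have h4 : ((2 * n - t : ℕ) : ℝ) < (((ξs + 1) * (n - t) : ℕ) : ℝ) := by exact_mod_cast h3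
      rw [Nat.cast_mul, hcastnt, hcast2nt] at h4
      rw [hc, div_le_iff₀ hd0]; push_cast at h4 ⊢; nlinarith
    · have hξeq : ξs = t + 1 := by rw [hξ, min_eq_right (by omega : t + 1 ≤ (2 * n - t) / (n - t))]
      rw [hc, div_le_iff₀ hd0, hξeq]
      push_cast
      nlinarith
  have hK : ((ξs - 1 : ℕ) : ℝ) = (ξs : ℝ) - 1 := by
    push_cast [Nat.cast_sub (by omega : 1 ≤ ξs)]; ring
  set sκ : ℝ := s ⟨ξs - 1, hκn⟩ with hsκ
  have hsκ0 : 0 ≤ sκ := hs0 _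
  set yv : ℝ := sκ / (N - T) with hyv
  have hy0 : 0 ≤ yv := div_nonneg hsκ0 (le_of_lt hd0)
  have hsκy : sκ = (N - T) * yv := by rw [hyv]; field_simp
  constructor
  · -- membership: construct the optimal v
    set v : Fin n → ℝ := fun i => if i.val < ξs - 1 then s i - (N - T - 1) * yv else yv with hv
    have hvdef : ∀ i : Fin n, v i = if i.val < ξs - 1 then s i - (N - T - 1) * yv else yv :=
      fun i => rfl
    have hvy : ∀ i, yv ≤ v i := by
      intro i
      rw [hvdef i]
      split_ifs with h
      · have hle : i ≤ (⟨ξs - 1, hκn⟩ : Fin n) := by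
          rw [Fin.le_def]; exact le_of_lt h
        have h6 : sκ ≤ s i := hsmono i _ hle
        rw [hsκy] at h6
        linarith
      · exact le_refl _
    have hv0 : ∀ i, 0 ≤ v i := fun i => le_trans hy0 (hvy i)
    refine ⟨v, hv0, ?_, ?_⟩
    · -- feasibility
      intro j A hA hjA
      have hjc : j ∈ Aᶜ := Finset.mem_compl.mpr hjA
      have hcard : (Aᶜ).card = n - t := by
        rw [Finset.card_compl, hA, Fintype.card_fin]
      have hsplit : ∑ i ∈ Aᶜ, v i = v j + ∑ i ∈ (Aᶜ).erase j, v i :=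
        (Finset.add_sum_erase _ v hjc).symm
      have herase : ((Aᶜ).erase j).card = n - t - 1 := by
        rw [Finset.card_erase_of_mem hjc, hcard]
      have hlow : ((n - t - 1 : ℕ) : ℝ) * yv ≤ ∑ i ∈ (Aᶜ).erase j, v i := by
        have := Finset.card_nsmul_le_sum ((Aᶜ).erase j) v yv (fun i _ => hvy i)
        rwa [herase, nsmul_eq_mul] at this
      have hcast : ((n - t - 1 : ℕ) : ℝ) = N - T - 1 := by
        rw [show n - t - 1 = n - (t + 1) from by omega,
          Nat.cast_sub (by omega : t + 1 ≤ n), hN, hT]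
        push_cast; ring
      have key : s j ≤ v j + (N - T - 1) * yv := by
        rw [hvdef j]
        split_ifs with h
        · linarith
        · have hjκ : (⟨ξs - 1, hκn⟩ : Fin n) ≤ j := by
            rw [Fin.le_def]; simpa using not_lt.mp h
          have h5 : s j ≤ sκ := hsmono _ j hjκ
          rw [hsκy] at h5
          linarith
      rw [hsplit]; rw [hcast] at hlow; linarith
    · -- value equality
      have hsum := Finset.sum_filter_add_sum_filter_not Finset.univ
        (fun i : Fin n => i.val < ξs - 1) v
      have hcard1 : (Finset.univ.filter (fun i : Fin n => i.val < ξs - 1)).card = ξs - 1 :=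
        card_filter_val_lt n (ξs - 1) (by omega)
      have hcard2 : (Finset.univ.filter (fun i : Fin n => ¬ i.val < ξs - 1)).card
          = n - (ξs - 1) := by
        have := Finset.card_filter_add_card_filter_not (s := (Finset.univ : Finset (Fin n)))
          (p := fun i : Fin n => i.val < ξs - 1)
        rw [hcard1, Finset.card_univ, Fintype.card_fin] at this
        omega
      have h1 : ∑ i ∈ Finset.univ.filter (fun i : Fin n => i.val < ξs - 1), v i
          = (∑ i ∈ Finset.univ.filter (fun i : Fin n => i.val < ξs - 1), s i)
            - ((ξs : ℝ) - 1) * ((N - T - 1) * yv) := by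
        rw [Finset.sum_congr rfl (fun i hi => by
          rw [hvdef i, if_pos (Finset.mem_filter.mp hi).2])]
        rw [Finset.sum_sub_distrib, Finset.sum_const, hcard1, nsmul_eq_mul, hK]
      have h2 : ∑ i ∈ Finset.univ.filter (fun i : Fin n => ¬ i.val < ξs - 1), v i
          = (N - ((ξs : ℝ) - 1)) * yv := by
        rw [Finset.sum_congr rfl (fun i hi => by
          rw [hvdef i, if_neg (Finset.mem_filter.mp hi).2])]
        rw [Finset.sum_const, hcard2, nsmul_eq_mul]
        congr 1
        rw [Nat.cast_sub (by omega : ξs - 1 ≤ n), hK, hN]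
      rw [← hsum, h1, h2, hsκy, hc]
      field_simp
      ring
  · -- lower bound
        rintro x ⟨v, hv0, hfeas, rfl⟩
        classical
        -- B: the n-t indices with smallest v
        set σ := Tuple.sort v with hσ
        set B : Finset (Fin n) :=
          (Finset.univ.filter (fun k : Fin n => k.val < n - t)).image σ with hB
        have hBcard : B.card = n - t := by
          rw [hB, Finset.card_image_of_injective _ σ.injective,
            card_filter_val_lt n (n - t) (by omega)]
        have hBle : ∀ i ∈ B, ∀ k, k ∉ B → v i ≤ v k := by
          intro i hi k hk
          rw [hB, Finset.mem_image] at hi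
          obtain ⟨a, ha, rfl⟩ := hi
          have ha' : a.val < n - t := (Finset.mem_filter.mp ha).2
          have hb : ¬ (σ.symm k).val < n - t := by
            intro hcon
            apply hk
            rw [hB, Finset.mem_image]
            exact ⟨σ.symm k, Finset.mem_filter.mpr ⟨Finset.mem_univ _, hcon⟩,
              Equiv.apply_symm_apply σ k⟩
          have hab : a ≤ σ.symm k := by rw [Fin.le_def]; omega
          have := Tuple.monotone_sort v hab
          rw [← hσ] at this
          simpa [Equiv.apply_symm_apply] using this
        have hBne : B.Nonempty := Finset.card_pos.mp (by omega)
        obtain ⟨im, him, hmax⟩ := Finset.exists_max_image B v hBne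
        set w : ℝ := v im with hw
        set W : ℝ := ∑ i ∈ B, v i with hW
        have hW0 : 0 ≤ W := Finset.sum_nonneg (fun i _ => hv0 i)
        have hWw : W ≤ (N - T) * w := by
          have := Finset.sum_le_card_nsmul B v w (fun i hi => hmax i hi)
          rwa [hBcard, nsmul_eq_mul, hcastnt] at this
        have hvlow : ∀ i, i ∉ B → w ≤ v i := fun i hi => hBle im him i hi
        -- fact 1
        have fact1 : ∀ j ∈ B, s j ≤ W := by
          intro j hj
          have hcard : (Bᶜ).card = t := by
            rw [Finset.card_compl, hBcard, Fintype.card_fin]; omega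
          have := hfeas j Bᶜ hcard (by simpa using hj)
          rwa [compl_compl] at this
        -- fact 2
        have fact2 : ∀ j, j ∉ B → s j ≤ v j + (W - w) := by
          intro j hj
          set C : Finset (Fin n) := insert j (B.erase im) with hC
          have hjC : j ∉ B.erase im := fun h => hj (Finset.mem_of_mem_erase h)
          have hCcard : C.card = n - t := by
            rw [hC, Finset.card_insert_of_notMem hjC, Finset.card_erase_of_mem him, hBcard]
            omega
          have hAcard : (Cᶜ).card = t := by
            rw [Finset.card_compl, hCcard, Fintype.card_fin]; omega
          have hjA : j ∉ Cᶜ := by simp [hC]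
          have := hfeas j Cᶜ hAcard hjA
          rw [compl_compl, hC, Finset.sum_insert hjC,
            Finset.sum_erase_eq_sub him] at this
          linarith
        -- j₀
        set j₀ : Fin n := B.min' hBne with hj₀
        have hj₀B : j₀ ∈ B := B.min'_mem hBne
        have hminlt : ∀ k : Fin n, k.val < j₀.val → k ∉ B := by
          intro k hk hkB
          have := B.min'_le k hkB
          rw [Fin.le_def] at this; omega
        have hpt : j₀.val ≤ t := by
          by_contra hcon
          push_neg at hcon
          have hsub : B ⊆ Finset.univ.filter (fun i : Fin n => ¬ i.val < t + 1) := by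
            intro i hi
            have := B.min'_le i hi
            rw [Fin.le_def] at this
            exact Finset.mem_filter.mpr ⟨Finset.mem_univ _, by omega⟩
          have hle := Finset.card_le_card hsub
          have hcardnot : (Finset.univ.filter (fun i : Fin n => ¬ i.val < t + 1)).card
              = n - (t + 1) := by
            have h := Finset.card_filter_add_card_filter_not
              (s := (Finset.univ : Finset (Fin n))) (p := fun i : Fin n => i.val < t + 1)
            rw [card_filter_val_lt n (t + 1) (by omega), Finset.card_univ, Fintype.card_fin] at h
            omega
          rw [hBcard, hcardnot] at hle
          omega
        -- X function
        set X : Fin n → ℝ := fun i => max (s i - W) 0 with hXdef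
        have hXd : ∀ i : Fin n, X i = max (s i - W) 0 := fun i => rfl
        have hX0 : ∀ i, 0 ≤ X i := fun i => le_max_right _ _
        -- step: sum over Bᶜ
        have hBccard : (Bᶜ).card = t := by
          rw [Finset.card_compl, hBcard, Fintype.card_fin]; omega
        have step1 : T * w + ∑ i ∈ Finset.univ.filter (fun i : Fin n => i.val < j₀.val), X i
            ≤ ∑ i ∈ Bᶜ, v i := by
          have hpt1 : ∀ i ∈ Bᶜ, w + (if i.val < j₀.val then X i else 0) ≤ v i := by
            intro i hi
            have hiB : i ∉ B := Finset.mem_compl.mp hi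
            split_ifs with h
            · rw [hXd]
              have h1 := fact2 i hiB
              have h2 := hvlow i hiB
              have : max (s i - W) 0 ≤ v i - w := max_le (by linarith) (by linarith)
              linarith
            · simpa using hvlow i hiB
          have h3 : ∑ i ∈ Bᶜ, (w + (if i.val < j₀.val then X i else 0)) ≤ ∑ i ∈ Bᶜ, v i :=
            Finset.sum_le_sum hpt1
          rw [Finset.sum_add_distrib, Finset.sum_const, hBccard, nsmul_eq_mul,
            ← Finset.sum_filter] at h3
          have hfeq : Bᶜ.filter (fun i : Fin n => i.val < j₀.val)
              = Finset.univ.filter (fun i : Fin n => i.val < j₀.val) := by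
            ext i
            simp only [Finset.mem_filter, Finset.mem_compl, Finset.mem_univ, true_and]
            exact ⟨fun h => h.2, fun h => ⟨hminlt i h, h⟩⟩
          rw [hfeq] at h3
          rw [hT]
          exact h3
        -- step: extend sum to t+1
        have step2 : ∑ i ∈ Finset.univ.filter (fun i : Fin n => i.val < j₀.val), X i
            = ∑ i ∈ Finset.univ.filter (fun i : Fin n => i.val < t + 1), X i := by
          apply Finset.sum_subset
          · intro i hi
            simp only [Finset.mem_filter, Finset.mem_univ, true_and] at hi ⊢
            omega
          · intro i _ hi2
            simp only [Finset.mem_filter, Finset.mem_univ, true_and, not_lt] at hi2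
            have hj₀i : j₀ ≤ i := by rw [Fin.le_def]; omega
            have : s i ≤ s j₀ := hsmono j₀ i hj₀i
            have hsj₀ : s j₀ ≤ W := fact1 j₀ hj₀B
            rw [hXd]
            exact max_eq_right (by linarith)
        -- step: restrict
        set α : ℝ := c - (ξs : ℝ) with hα
        have hα0 : 0 ≤ α := by rw [hα]; linarith
        have hα1 : α ≤ 1 := by rw [hα]; linarith
        have step3 : (∑ i ∈ Finset.univ.filter (fun i : Fin n => i.val < ξs - 1), X i)
              + α * X ⟨ξs - 1, hκn⟩
            ≤ ∑ i ∈ Finset.univ.filter (fun i : Fin n => i.val < t + 1), X i := by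
          have hsub : Finset.univ.filter (fun i : Fin n => i.val < ξs - 1)
              ⊆ Finset.univ.filter (fun i : Fin n => i.val < t + 1) := by
            intro i hi
            simp only [Finset.mem_filter, Finset.mem_univ, true_and] at hi ⊢
            omega
          have hsplit := Finset.sum_sdiff (f := X) hsub
          have hmem : (⟨ξs - 1, hκn⟩ : Fin n) ∈
              Finset.univ.filter (fun i : Fin n => i.val < t + 1)
                \ Finset.univ.filter (fun i : Fin n => i.val < ξs - 1) := by
            simp only [Finset.mem_sdiff, Finset.mem_filter, Finset.mem_univ, true_and]
            omega
          have hsingle : X ⟨ξs - 1, hκn⟩ ≤ ∑ i ∈ Finset.univ.filter (fun i : Fin n => i.val < t + 1)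
                \ Finset.univ.filter (fun i : Fin n => i.val < ξs - 1), X i :=
            Finset.single_le_sum (fun i _ => hX0 i) hmem
          have : α * X ⟨ξs - 1, hκn⟩ ≤ X ⟨ξs - 1, hκn⟩ := by
            calc α * X ⟨ξs - 1, hκn⟩ ≤ 1 * X ⟨ξs - 1, hκn⟩ :=
                  mul_le_mul_of_nonneg_right hα1 (hX0 _)
              _ = X ⟨ξs - 1, hκn⟩ := one_mul _
          linarith
        -- final assembly
        have hcardκ : (Finset.univ.filter (fun i : Fin n => i.val < ξs - 1)).card = ξs - 1 :=
          card_filter_val_lt n (ξs - 1) (by omega)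
        have hfinal : ∑ i ∈ Finset.univ.filter (fun i : Fin n => i.val < ξs - 1), s i
              + α * sκ
            ≤ ((ξs : ℝ) - 1 + α) * W
              + ((∑ i ∈ Finset.univ.filter (fun i : Fin n => i.val < ξs - 1), X i)
                + α * X ⟨ξs - 1, hκn⟩) := by
          have hterm : ∀ i ∈ Finset.univ.filter (fun i : Fin n => i.val < ξs - 1),
              s i ≤ W + X i := by
            intro i _
            rw [hXd]
            have : s i - W ≤ max (s i - W) 0 := le_max_left _ _
            linarith
          have h1 : ∑ i ∈ Finset.univ.filter (fun i : Fin n => i.val < ξs - 1), s i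
              ≤ ∑ i ∈ Finset.univ.filter (fun i : Fin n => i.val < ξs - 1), (W + X i) :=
            Finset.sum_le_sum hterm
          rw [Finset.sum_add_distrib, Finset.sum_const, hcardκ, nsmul_eq_mul, hK] at h1
          have h2 : α * sκ ≤ α * (W + X ⟨ξs - 1, hκn⟩) := by
            apply mul_le_mul_of_nonneg_left _ hα0
            have hXκ : sκ - W ≤ X ⟨ξs - 1, hκn⟩ := by
              rw [hXd]; exact le_max_left _ _
            linarith
          linarith
        -- combine everything
        have hsumsplit : ∑ i, v i = W + ∑ i ∈ Bᶜ, v i := by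
          rw [hW, Finset.sum_add_sum_compl]
        have htw : ((ξs : ℝ) - 1 + α) * W ≤ W + T * w := by
          have h2' : ((ξs : ℝ) - 1 + α) = N / (N - T) := by
            rw [hα, hc]; field_simp; ring
          have hscalar : N / (N - T) = 1 + T / (N - T) := by
            field_simp
            ring
          have key : (T / (N - T)) * W ≤ T * w := by
            have h4 : (T / (N - T)) * W ≤ (T / (N - T)) * ((N - T) * w) :=
              mul_le_mul_of_nonneg_left hWw (div_nonneg (by linarith) (le_of_lt hd0))
            have h5 : (T / (N - T)) * ((N - T) * w) = T * w := by
              field_simp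
            linarith
          calc ((ξs : ℝ) - 1 + α) * W = (1 + T / (N - T)) * W := by rw [h2', hscalar]
            _ = W + (T / (N - T)) * W := by ring
            _ ≤ W + T * w := by linarith [key]
        rw [hsumsplit]
        calc (∑ j ∈ Finset.univ.filter (fun j : Fin n => j.val < ξs - 1), s j) + (c - (ξs:ℝ)) * sκ
            = (∑ i ∈ Finset.univ.filter (fun i : Fin n => i.val < ξs - 1), s i) + α * sκ := by
              rw [hα]
          _ ≤ ((ξs : ℝ) - 1 + α) * W
              + ((∑ i ∈ Finset.univ.filter (fun i : Fin n => i.val < ξs - 1), X i)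
                + α * X ⟨ξs - 1, hκn⟩) := hfinal
          _ ≤ ((ξs : ℝ) - 1 + α) * W
              + ∑ i ∈ Finset.univ.filter (fun i : Fin n => i.val < t + 1), X i := by
              linarith [step3]
          _ ≤ (W + T * w)
              + ∑ i ∈ Finset.univ.filter (fun i : Fin n => i.val < t + 1), X i := by
              linarith [htw]
          _ = W + (T * w
              + ∑ i ∈ Finset.univ.filter (fun i : Fin n => i.val < j₀.val), X i) := by
              rw [step2]; ring
          _ ≤ W + ∑ i ∈ Bᶜ, v i := by linarith [step1]
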